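/- Success probability in cycle networks: let m ≥ 3 and c ≥ 1 be integers, and consider the cycle credit network on V = ZMod m with cap i j = c if j = i + 1 or i = j + 1, and cap i j = 0 otherwise. Fix an integer l with 1 ≤ l ≤ m − 1, and let s = 0 and t = l in ZMod m. Then the number of distinct score vectors d such that the unit transaction (s,t) is feasible in some (equivalently, every) state with score vector d equals c^l·(c+1)^{m−l} + c^{m−l}·(c+1)^l − 2·c^m. Consequently, writing r = c/(c+1), the fraction of the (c+1)^m − c^m score vectors in which the transaction (s,t) is feasible equals (r^l + r^{m−l} − 2r^m)/(1 − r^m). -/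

import Mathlib

open Finset

/-- A state of a credit network with capacities `cap`: `σ u v + σ v u = cap u v`. -/
def IsState {V : Type*} (cap σ : V → V → ℕ) : Prop :=
  ∀ u v : V, σ u v + σ v u = cap u v

/-- The score vector of a state: total capacity on outgoing edges of each vertex. -/
def score {V : Type*} [Fintype V] (σ : V → V → ℕ) (v : V) : ℕ := ∑ u, σ v u

/-- `u : Fin (k+1) → V` is a feasible path for a unit payment from `s` to `t` in state `σ`. -/
def FeasiblePath {V : Type*} (σ : V → V → ℕ) (s t : V) (k : ℕ) (u : Fin (k + 1) → V) : Prop :=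
  1 ≤ k ∧ Function.Injective u ∧ u 0 = s ∧ u (Fin.last k) = t ∧
    ∀ i : Fin k, 1 ≤ σ (u i.succ) (u i.castSucc)

/-- The unit transaction `(s,t)` is feasible in `σ`. -/
def Feasible {V : Type*} (σ : V → V → ℕ) (s t : V) : Prop :=
  ∃ (k : ℕ) (u : Fin (k + 1) → V), FeasiblePath σ s t k u

/-- `σ'` is the result of routing a unit payment along the path `u` in `σ`. -/
def RouteResult {V : Type*} (σ σ' : V → V → ℕ) (k : ℕ) (u : Fin (k + 1) → V) : Prop :=
  (∀ i : Fin k,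
      σ' (u i.succ) (u i.castSucc) = σ (u i.succ) (u i.castSucc) - 1 ∧
      σ' (u i.castSucc) (u i.succ) = σ (u i.castSucc) (u i.succ) + 1) ∧
  ∀ x y : V,
    (∀ i : Fin k, ¬(x = u i.succ ∧ y = u i.castSucc) ∧ ¬(x = u i.castSucc ∧ y = u i.succ)) →
    σ' x y = σ x y

/-- `σ'` is obtained from `σ` by routing a unit payment from `s` to `t` along some feasible path. -/
def RoutesUnit {V : Type*} (σ σ' : V → V → ℕ) (s t : V) : Prop :=
  ∃ (k : ℕ) (u : Fin (k + 1) → V), FeasiblePath σ s t k u ∧ RouteResult σ σ' k u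

namespace S11
variable {m : ℕ}


def sig (c : ℕ) {m : ℕ} (a : ZMod m → ℕ) : ZMod m → ZMod m → ℕ := fun i j =>
  if j = i + 1 then a i else if i = j + 1 then c - a j else 0
def Sc (c : ℕ) {m : ℕ} (a : ZMod m → ℕ) : ZMod m → ℕ := fun i => a i + (c - a (i - 1))
def CWp (c l : ℕ) {m : ℕ} (a : ZMod m → ℕ) : Prop := ∀ i : ZMod m, i.val < l → a i < c
def CCWp (l : ℕ) {m : ℕ} (a : ZMod m → ℕ) : Prop := ∀ i : ZMod m, l ≤ i.val → 1 ≤ a i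

lemma two_ne (hm : 3 ≤ m) : (2 : ZMod m) ≠ 0 := by
  have : ((2:ℕ) : ZMod m) ≠ 0 := by
    rw [Ne, ZMod.natCast_eq_zero_iff]
    intro hd; have := Nat.le_of_dvd (by norm_num) hd; omega
  simpa using this
lemma one_ne (hm : 3 ≤ m) : (1 : ZMod m) ≠ 0 := by
  have : ((1:ℕ) : ZMod m) ≠ 0 := by
    rw [Ne, ZMod.natCast_eq_zero_iff]
    intro hd; have := Nat.le_of_dvd (by norm_num) hd; omega
  simpa using this
lemma add_one_ne (hm : 3 ≤ m) (x : ZMod m) : x + 1 ≠ x := by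
  intro h; exact one_ne hm (by linear_combination h)
lemma not_both (hm : 3 ≤ m) {i j : ZMod m} (h1 : j = i + 1) (h2 : i = j + 1) : False :=
  two_ne hm (by linear_combination - h1 - h2)

lemma isState_sig (hm : 3 ≤ m) (c : ℕ) (a : ZMod m → ℕ) (ha : ∀ i, a i ≤ c) :
    IsState (fun i j : ZMod m => if j = i + 1 ∨ i = j + 1 then c else 0) (sig c a) := by
  intro u v
  simp only [sig]
  by_cases h1 : v = u + 1 <;> by_cases h2 : u = v + 1
  · exact (not_both hm h1 h2).elim
  · rw [if_pos h1, if_neg h2, if_pos h1, if_pos (Or.inl h1)]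
    have := ha u; omega
  · rw [if_neg h1, if_pos h2, if_pos h2, if_pos (Or.inr h2)]
    have := ha v; omega
  · simp [h1, h2]

lemma state_eq_sig (hm : 3 ≤ m) {c : ℕ} {σ : ZMod m → ZMod m → ℕ}
    (hσ : IsState (fun i j : ZMod m => if j = i + 1 ∨ i = j + 1 then c else 0) σ) :
    σ = sig c (fun i => σ i (i + 1)) ∧ ∀ i : ZMod m, σ i (i + 1) ≤ c := by
  constructor
  · funext u v
    simp only [sig]
    by_cases h1 : v = u + 1 <;> by_cases h2 : u = v + 1
    · exact (not_both hm h1 h2).elim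
    · rw [if_pos h1, ← h1]
    · rw [if_neg h1, if_pos h2]
      have h := hσ v u
      dsimp only at h
      rw [if_pos (Or.inl h2)] at h
      rw [h2] at h ⊢
      omega
    · rw [if_neg h1, if_neg h2]
      have h := hσ u v
      dsimp only at h
      rw [if_neg (by tauto)] at h
      omega
  · intro i
    have h := hσ i (i + 1)
    dsimp only at h
    rw [if_pos (Or.inl rfl)] at h
    omega

lemma sub_one_ne_add_one (hm : 3 ≤ m) (v : ZMod m) : v - 1 ≠ v + 1 := by
  intro h; exact two_ne hm (by linear_combination - h)

lemma score_sig [NeZero m] (hm : 3 ≤ m) {c : ℕ} (a : ZMod m → ℕ) :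
    score (sig c a) = Sc c a := by
  funext v
  have hsub : ({v - 1, v + 1} : Finset (ZMod m)) ⊆ Finset.univ := Finset.subset_univ _
  have hz : ∀ x ∈ Finset.univ, x ∉ ({v - 1, v + 1} : Finset (ZMod m)) → sig c a v x = 0 := by
    intro x _ hx
    simp only [Finset.mem_insert, Finset.mem_singleton, not_or] at hx
    simp only [sig]
    rw [if_neg (by tauto), if_neg]
    intro h
    exact hx.1 (by linear_combination - h)
  have : score (sig c a) v = ∑ x ∈ ({v - 1, v + 1} : Finset (ZMod m)), sig c a v x :=
    (Finset.sum_subset hsub hz).symm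
  rw [this, Finset.sum_pair (sub_one_ne_add_one hm v)]
  simp only [sig, Sc]
  rw [if_neg (fun h => sub_one_ne_add_one hm v h), if_pos (by ring)]
  simp only [if_true, eq_self_iff_true]
  omega

variable {m : ℕ}
lemma sigA (c : ℕ) (a : ZMod m → ℕ) (x : ZMod m) : sig c a x (x + 1) = a x := by
  simp [sig]

lemma sigB (hm : 3 ≤ m) (c : ℕ) (a : ZMod m → ℕ) (x : ZMod m) :
    sig c a (x + 1) x = c - a x := by
  simp only [sig]
  rw [if_neg (fun h => two_ne hm (by linear_combination - h))]
  simp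

lemma step_cases (hm : 3 ≤ m) {c : ℕ} {a : ZMod m → ℕ} {x y : ZMod m}
    (h : 1 ≤ sig c a x y) :
    (y = x + 1 ∧ 1 ≤ a x) ∨ (x = y + 1 ∧ 1 ≤ c - a y) := by
  simp only [sig] at h
  split_ifs at h with h1 h2
  · exact Or.inl ⟨h1, h⟩
  · exact Or.inr ⟨h2, h⟩
  · omega

lemma neg_natCast {n : ℕ} (h : n ≤ m) : ((m - n : ℕ) : ZMod m) = -(n : ZMod m) := by
  have : ((m - n : ℕ) : ZMod m) + (n : ZMod m) = 0 := by
    rw [← Nat.cast_add]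
    rw [Nat.sub_add_cancel h]
    exact ZMod.natCast_self m
  linear_combination this

lemma feas_iff [NeZero m] (hm : 3 ≤ m) {c l : ℕ} (hc : 1 ≤ c) (hl : 1 ≤ l) (hlm : l ≤ m - 1)
    (a : ZMod m → ℕ) (ha : ∀ i, a i ≤ c) :
    Feasible (sig c a) 0 (l : ZMod m) ↔ CWp c l a ∨ CCWp l a := by
  have hlm' : l < m := by omega
  constructor
  · rintro ⟨k, u, hk, hinj, h0, hlast, hstep⟩
    have hstep' : ∀ n (hn : n < k),
        1 ≤ sig c a (u ⟨n + 1, by omega⟩) (u ⟨n, by omega⟩) := by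
      intro n hn
      have := hstep ⟨n, hn⟩
      simpa [Fin.succ, Fin.castSucc, Fin.castAdd, Fin.castLE] using this
    have hdi : ∀ n (hn : n < k),
        u ⟨n + 1, by omega⟩ = u ⟨n, by omega⟩ + 1 ∨
        u ⟨n + 1, by omega⟩ = u ⟨n, by omega⟩ - 1 := by
      intro n hn
      rcases step_cases hm (hstep' n hn) with ⟨h, -⟩ | ⟨h, -⟩
      · right; linear_combination - h
      · left; exact h
    have h00 : u ⟨0, by omega⟩ = 0 := h0
    -- case on direction of first step
    rcases hdi 0 hk with hd | hd
    · -- forward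
      have key : ∀ n (hn : n ≤ k), u ⟨n, by omega⟩ = (n : ZMod m) := by
        intro n
        induction n using Nat.strong_induction_on with
        | _ n ih =>
          intro hn
          match n, hn with
          | 0, _ => simpa using h00
          | 1, h1 => rw [hd, h00]; norm_num
          | (n+2), hn2 =>
            have ih1 := ih (n+1) (by omega) (by omega)
            have ih0 := ih n (by omega) (by omega)
            rcases hdi (n+1) (by omega) with h | h
            · rw [h, ih1]; push_cast; ring
            · exfalso
              have : u ⟨n + 2, by omega⟩ = u ⟨n, by omega⟩ := by
                rw [h, ih1, ih0]; push_cast; ring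
              have := hinj this
              simp only [Fin.mk.injEq] at this
              omega
      have hkm : k < m := by
        by_contra hkm
        push_neg at hkm
        have h2 : u ⟨m, by omega⟩ = u ⟨0, by omega⟩ := by
          rw [key m (by omega), h00, ZMod.natCast_self]
        have := hinj h2
        simp only [Fin.mk.injEq] at this
        omega
      have hkl : k = l := by
        have h1 : u ⟨k, by omega⟩ = (l : ZMod m) := hlast
        rw [key k le_rfl] at h1
        have := congrArg ZMod.val h1
        rwa [ZMod.val_cast_of_lt hkm, ZMod.val_cast_of_lt hlm'] at this
      left
      intro i hi
      have hiv : i.val < k := by omega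
      have := hstep' i.val hiv
      rw [key i.val (by omega), key (i.val + 1) (by omega)] at this
      rw [Nat.cast_add, Nat.cast_one] at this
      rw [sigB hm] at this
      rw [ZMod.natCast_rightInverse i] at this
      omega
    · -- backward
      have key : ∀ n (hn : n ≤ k), u ⟨n, by omega⟩ = -(n : ZMod m) := by
        intro n
        induction n using Nat.strong_induction_on with
        | _ n ih =>
          intro hn
          match n, hn with
          | 0, _ => simpa using h00
          | 1, h1 => rw [hd, h00]; ring
          | (n+2), hn2 =>
            have ih1 := ih (n+1) (by omega) (by omega)
            have ih0 := ih n (by omega) (by omega)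
            rcases hdi (n+1) (by omega) with h | h
            · exfalso
              have : u ⟨n + 2, by omega⟩ = u ⟨n, by omega⟩ := by
                rw [h, ih1, ih0]; push_cast; ring
              have := hinj this
              simp only [Fin.mk.injEq] at this
              omega
            · rw [h, ih1]; push_cast; ring
      have hkm : k < m := by
        by_contra hkm
        push_neg at hkm
        have h2 : u ⟨m, by omega⟩ = u ⟨0, by omega⟩ := by
          rw [key m (by omega), h00, ZMod.natCast_self]; ring
        have := hinj h2
        simp only [Fin.mk.injEq] at this
        omega
      have hkl : k = m - l := by
        have h1 : u ⟨k, by omega⟩ = (l : ZMod m) := hlast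
        rw [key k le_rfl] at h1
        have h2 : ((m - l : ℕ) : ZMod m) = ((k : ℕ) : ZMod m) := by
          rw [neg_natCast (le_of_lt hlm')]
          linear_combination h1
        have := congrArg ZMod.val h2.symm
        rwa [ZMod.val_cast_of_lt hkm, ZMod.val_cast_of_lt (by omega)] at this
      right
      intro i hi
      have hvm : i.val < m := ZMod.val_lt i
      set n : ℕ := m - i.val - 1 with hn
      have hnk : n < k := by omega
      have := hstep' n hnk
      rw [key n (by omega), key (n + 1) (by omega)] at this
      have e1 : -((n : ZMod m)) = -(((n+1 : ℕ)) : ZMod m) + 1 := by push_cast; ring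
      rw [e1, sigA] at this
      have e2 : -(((n+1 : ℕ)) : ZMod m) = i := by
        rw [← neg_natCast (by omega)]
        have : m - (n + 1) = i.val := by omega
        rw [this]
        exact ZMod.natCast_rightInverse i
      rwa [e2] at this
  · rintro (hcw | hccw)
    · refine ⟨l, fun i => ((i.val : ℕ) : ZMod m), hl, ?_, by simp, ?_, ?_⟩
      · intro i j hij
        have hi : i.val < m := by omega
        have hj : j.val < m := by omega
        have := congrArg ZMod.val hij
        rw [ZMod.val_cast_of_lt hi, ZMod.val_cast_of_lt hj] at this
        exact Fin.ext this
      · simp [Fin.last]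
      · intro i
        have hi : i.val < l := i.isLt
        show 1 ≤ sig c a ((i.succ.val : ℕ) : ZMod m) ((i.castSucc.val : ℕ) : ZMod m)
        have e : ((i.succ.val : ℕ) : ZMod m) = ((i.castSucc.val : ℕ) : ZMod m) + 1 := by
          push_cast [Fin.val_succ, Fin.coe_castSucc]; ring
        rw [e, sigB hm]
        have hv : (((i.castSucc.val : ℕ) : ZMod m)).val < l := by
          rw [ZMod.val_cast_of_lt (by rw [Fin.coe_castSucc]; omega)]
          rw [Fin.coe_castSucc]; omega
        have := hcw _ hv
        omega
    · have hk1 : 1 ≤ m - l := by omega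
      refine ⟨m - l, fun i => -((i.val : ℕ) : ZMod m), hk1, ?_, by simp, ?_, ?_⟩
      · intro i j hij
        have hij' : ((i.val : ℕ) : ZMod m) = ((j.val : ℕ) : ZMod m) := by
          linear_combination - hij
        have hi : i.val < m := by omega
        have hj : j.val < m := by omega
        have := congrArg ZMod.val hij'
        rw [ZMod.val_cast_of_lt hi, ZMod.val_cast_of_lt hj] at this
        exact Fin.ext this
      · show -(((Fin.last (m - l)).val : ℕ) : ZMod m) = (l : ZMod m)
        rw [Fin.val_last]
        have h3 : ((m - (m - l) : ℕ) : ZMod m) = -((m - l : ℕ) : ZMod m) :=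
          neg_natCast (by omega)
        rw [show m - (m - l) = l by omega] at h3
        linear_combination - h3
      · intro i
        have hi : i.val < m - l := i.isLt
        show 1 ≤ sig c a (-((i.succ.val : ℕ) : ZMod m)) (-((i.castSucc.val : ℕ) : ZMod m))
        have e : -((i.castSucc.val : ℕ) : ZMod m) = -((i.succ.val : ℕ) : ZMod m) + 1 := by
          push_cast [Fin.val_succ, Fin.coe_castSucc]; ring
        rw [e, sigA]
        apply hccw
        have h4 : -((i.succ.val : ℕ) : ZMod m) = ((m - i.succ.val : ℕ) : ZMod m) := by
          rw [neg_natCast (by rw [Fin.val_succ]; omega)]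
        rw [h4, ZMod.val_cast_of_lt (by rw [Fin.val_succ]; omega)]
        rw [Fin.val_succ]
        omega

variable {m : ℕ}
lemma Sc_inj [NeZero m] {c : ℕ} {a b : ZMod m → ℕ} (ha : ∀ i, a i ≤ c) (hb : ∀ i, b i ≤ c)
    (ha0 : ∃ i, a i = 0) (hb0 : ∃ i, b i = 0) (h : Sc c a = Sc c b) : a = b := by
  have rel : ∀ i : ZMod m, a i + b (i - 1) = b i + a (i - 1) := by
    intro i
    have h1 := congrFun h i
    simp only [Sc] at h1
    have := ha (i - 1); have := hb (i - 1)
    omega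
  have chain : ∀ n : ℕ, a ((n : ℕ) : ZMod m) + b 0 = b ((n : ℕ) : ZMod m) + a 0 := by
    intro n
    induction n with
    | zero => simp only [Nat.cast_zero]; omega
    | succ n ih =>
      have h1 := rel (((n + 1 : ℕ)) : ZMod m)
      have e : ((n + 1 : ℕ) : ZMod m) - 1 = ((n : ℕ) : ZMod m) := by push_cast; ring
      rw [e] at h1
      omega
  have rel' : ∀ i : ZMod m, a i + b 0 = b i + a 0 := by
    intro i
    have := chain i.val
    rwa [ZMod.natCast_rightInverse i] at this
  obtain ⟨i0, hi0⟩ := ha0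
  obtain ⟨j0, hj0⟩ := hb0
  have h1 := rel' i0
  have h2 := rel' j0
  funext i
  have := rel' i
  omega

lemma normalize [NeZero m] {c l : ℕ} (hc : 1 ≤ c) {a : ZMod m → ℕ} (ha : ∀ i, a i ≤ c)
    (hf : CWp c l a ∨ CCWp l a) :
    ∃ b : ZMod m → ℕ, (∀ i, b i ≤ c) ∧ (CWp c l b ∨ CCWp l b) ∧ (∃ i, b i = 0) ∧
      Sc c b = Sc c a := by
  have hne : (Finset.univ : Finset (ZMod m)).Nonempty := Finset.univ_nonempty
  set t := Finset.univ.inf' hne a with htdef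
  have ht_le : ∀ i, t ≤ a i := fun i => Finset.inf'_le a (Finset.mem_univ i)
  obtain ⟨i0, -, hi0⟩ := Finset.exists_mem_eq_inf' hne a
  refine ⟨fun i => a i - t, fun i => by show a i - t ≤ c; have := ha i; omega, ?_,
    ⟨i0, by show a i0 - t = 0; omega⟩, ?_⟩
  · rcases hf with hcw | hccw
    · left; intro i hi
      show a i - t < c
      have := hcw i hi; have := ht_le i; omega
    · rcases Nat.eq_zero_or_pos t with h0 | h0
      · right; intro i hi
        show 1 ≤ a i - t
        have := hccw i hi; omega
      · left; intro i hi
        show a i - t < c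
        have := ha i; have := ht_le i; omega
  · funext i
    show (a i - t) + (c - (a (i - 1) - t)) = a i + (c - a (i - 1))
    have := ht_le i; have := ht_le (i - 1); have := ha (i - 1)
    omega

variable {m : ℕ}
lemma count [NeZero m] (hm : 3 ≤ m) {c l : ℕ} (hc : 1 ≤ c) (hl : 1 ≤ l) (hlm : l ≤ m - 1)
    (T : Finset (ZMod m → ℕ))
    (hT : ∀ a, a ∈ T ↔ (∀ i, a i ≤ c) ∧ (CWp c l a ∨ CCWp l a) ∧ ∃ i, a i = 0) :
    T.card = c ^ l * (c + 1) ^ (m - l) + c ^ (m - l) * (c + 1) ^ l - 2 * c ^ m := by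
  classical
  have hlm' : l < m := by omega
  set CWs : Finset (ZMod m) := (Finset.range l).image (Nat.cast : ℕ → ZMod m) with hCWsdef
  have hmem : ∀ i : ZMod m, i ∈ CWs ↔ i.val < l := by
    intro i
    rw [hCWsdef, Finset.mem_image]
    constructor
    · rintro ⟨n, hn, rfl⟩
      rw [Finset.mem_range] at hn
      rw [ZMod.val_cast_of_lt (by omega)]
      exact hn
    · intro h
      exact ⟨i.val, Finset.mem_range.2 h, ZMod.natCast_rightInverse i⟩
  have hcard : CWs.card = l := by
    rw [hCWsdef, Finset.card_image_of_injOn, Finset.card_range]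
    intro x hx y hy hxy
    rw [Finset.mem_coe, Finset.mem_range] at hx hy
    have := congrArg ZMod.val hxy
    rwa [ZMod.val_cast_of_lt (by omega), ZMod.val_cast_of_lt (by omega)] at this
  have hcardc : CWsᶜ.card = m - l := by
    rw [Finset.card_compl, hcard]
    congr 1
    exact ZMod.card m
  set A' := Fintype.piFinset fun i : ZMod m =>
    if i ∈ CWs then Finset.range c else Finset.range (c+1) with hA'def
  set B' := Fintype.piFinset fun i : ZMod m =>
    if i ∈ CWs then Finset.range (c+1) else Finset.Icc 1 c with hB'def
  set C' := Fintype.piFinset fun _ : ZMod m => Finset.Icc 1 c with hC'def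
  have hA : ∀ a : ZMod m → ℕ, a ∈ A' ↔ (∀ i, a i ≤ c) ∧ CWp c l a := by
    intro a
    rw [hA'def, Fintype.mem_piFinset]
    constructor
    · intro h
      refine ⟨fun i => ?_, fun i hi => ?_⟩
      · have := h i
        split_ifs at this <;> rw [Finset.mem_range] at this <;> omega
      · have := h i
        rw [if_pos ((hmem i).2 hi), Finset.mem_range] at this
        exact this
    · rintro ⟨h1, h2⟩ i
      by_cases hi : i ∈ CWs
      · rw [if_pos hi]
        exact Finset.mem_range.2 (h2 i ((hmem i).1 hi))
      · rw [if_neg hi]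
        exact Finset.mem_range.2 (by have := h1 i; omega)
  have hB : ∀ a : ZMod m → ℕ, a ∈ B' ↔ (∀ i, a i ≤ c) ∧ CCWp l a := by
    intro a
    rw [hB'def, Fintype.mem_piFinset]
    constructor
    · intro h
      refine ⟨fun i => ?_, fun i hi => ?_⟩
      · have := h i
        split_ifs at this
        · rw [Finset.mem_range] at this; omega
        · rw [Finset.mem_Icc] at this; omega
      · have hi' : i ∉ CWs := by rw [hmem]; omega
        have := h i
        rw [if_neg hi', Finset.mem_Icc] at this
        omega
    · rintro ⟨h1, h2⟩ i
      by_cases hi : i ∈ CWs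
      · rw [if_pos hi]
        exact Finset.mem_range.2 (by have := h1 i; omega)
      · rw [if_neg hi, Finset.mem_Icc]
        have hi2 : l ≤ i.val := by rw [hmem] at hi; omega
        exact ⟨h2 i hi2, h1 i⟩
  have hC : ∀ a : ZMod m → ℕ, a ∈ C' ↔ ∀ i, 1 ≤ a i ∧ a i ≤ c := by
    intro a
    rw [hC'def, Fintype.mem_piFinset]
    simp [Finset.mem_Icc]
  have hTeq : T = (A' ∪ B') \ C' := by
    ext a
    rw [hT, Finset.mem_sdiff, Finset.mem_union, hA, hB, hC]
    constructor
    · rintro ⟨hbox, hf, i0, hi0⟩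
      refine ⟨by tauto, fun hall => by have := hall i0; omega⟩
    · rintro ⟨hun, hnot⟩
      have hbox : ∀ i, a i ≤ c := by tauto
      refine ⟨hbox, by tauto, ?_⟩
      by_contra hno
      push_neg at hno
      exact hnot fun i => ⟨by have := hno i; omega, hbox i⟩
  have hsub : C' ⊆ A' ∪ B' := by
    intro a ha
    apply Finset.mem_union_right
    rw [hB]
    rw [hC] at ha
    exact ⟨fun i => (ha i).2, fun i _ => (ha i).1⟩
  have cardm : (Finset.univ : Finset (ZMod m)).card = m := by
    rw [Finset.card_univ]; exact ZMod.card m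
  have cA : A'.card = c ^ l * (c + 1) ^ (m - l) := by
    rw [hA'def, Fintype.card_piFinset, ← Finset.prod_mul_prod_compl CWs]
    have e1 : ∏ i ∈ CWs, #(if i ∈ CWs then range c else range (c+1)) = ∏ _i ∈ CWs, c :=
      Finset.prod_congr rfl (fun i hi => by rw [if_pos hi, Finset.card_range])
    have e2 : ∏ i ∈ CWsᶜ, #(if i ∈ CWs then range c else range (c+1)) = ∏ _i ∈ CWsᶜ, (c+1) :=
      Finset.prod_congr rfl
        (fun i hi => by rw [if_neg (Finset.mem_compl.1 hi), Finset.card_range])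
    rw [e1, e2, Finset.prod_const, Finset.prod_const, hcard, hcardc]
  have cB : B'.card = c ^ (m - l) * (c + 1) ^ l := by
    rw [hB'def, Fintype.card_piFinset, ← Finset.prod_mul_prod_compl CWs]
    have e1 : ∏ i ∈ CWs, #(if i ∈ CWs then range (c+1) else Icc 1 c) = ∏ _i ∈ CWs, (c+1) :=
      Finset.prod_congr rfl (fun i hi => by rw [if_pos hi, Finset.card_range])
    have e2 : ∏ i ∈ CWsᶜ, #(if i ∈ CWs then range (c+1) else Icc 1 c) = ∏ _i ∈ CWsᶜ, c :=
      Finset.prod_congr rfl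
        (fun i hi => by
          rw [if_neg (Finset.mem_compl.1 hi), Nat.card_Icc, show c + 1 - 1 = c by omega])
    rw [e1, e2, Finset.prod_const, Finset.prod_const, hcard, hcardc]
    ring
  have cC : C'.card = c ^ m := by
    rw [hC'def, Fintype.card_piFinset]
    have e1 : ∏ _i : ZMod m, #(Icc 1 c) = ∏ _i : ZMod m, c :=
      Finset.prod_congr rfl (fun i _ => by rw [Nat.card_Icc, show c + 1 - 1 = c by omega])
    rw [e1, Finset.prod_const, cardm]
  have cAB : (A' ∩ B').card = c ^ m := by
    have : A' ∩ B' = Fintype.piFinset fun i : ZMod m =>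
        if i ∈ CWs then Finset.range c else Finset.Icc 1 c := by
      ext a
      rw [Finset.mem_inter, hA'def, hB'def, Fintype.mem_piFinset, Fintype.mem_piFinset,
        Fintype.mem_piFinset]
      constructor
      · rintro ⟨h1, h2⟩ i
        have := h1 i; have := h2 i
        by_cases hi : i ∈ CWs
        · rw [if_pos hi] at *
          assumption
        · rw [if_neg hi] at *
          assumption
      · intro h
        constructor <;> intro i <;> have := h i <;> by_cases hi : i ∈ CWs
        · rw [if_pos hi] at *; assumption
        · rw [if_neg hi] at *
          rw [Finset.mem_Icc] at this
          rw [Finset.mem_range]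
          omega
        · rw [if_pos hi] at *
          rw [Finset.mem_range] at this
          rw [Finset.mem_range]
          omega
        · rw [if_neg hi] at *; assumption
    rw [this, Fintype.card_piFinset]
    have e1 : ∏ i : ZMod m, #(if i ∈ CWs then range c else Icc 1 c) = ∏ _i : ZMod m, c :=
      Finset.prod_congr rfl (fun i _ => by
        split_ifs
        · rw [Finset.card_range]
        · rw [Nat.card_Icc, show c + 1 - 1 = c by omega])
    rw [e1, Finset.prod_const, cardm]
  have h1 : (A' ∪ B').card + (A' ∩ B').card = A'.card + B'.card :=
    Finset.card_union_add_card_inter A' B'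
  have h2 : T.card + C'.card = (A' ∪ B').card := by
    rw [hTeq]
    exact Finset.card_sdiff_add_card_eq_card hsub
  rw [cA, cB] at h1
  rw [cC] at h2
  rw [cAB] at h1
  have hle1 : c ^ m ≤ c ^ l * (c + 1) ^ (m - l) := by
    calc c ^ m = c ^ l * c ^ (m - l) := by rw [← pow_add]; congr 1; omega
    _ ≤ c ^ l * (c + 1) ^ (m - l) :=
      Nat.mul_le_mul_left _ (Nat.pow_le_pow_left (by omega) _)
  have hle2 : c ^ m ≤ c ^ (m - l) * (c + 1) ^ l := by
    calc c ^ m = c ^ (m - l) * c ^ l := by rw [← pow_add]; congr 1; omega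
    _ ≤ c ^ (m - l) * (c + 1) ^ l :=
      Nat.mul_le_mul_left _ (Nat.pow_le_pow_left (by omega) _)
  omega

end S11

/-- Success probability in cycle networks: the number of score vectors (equivalence
classes) of the cycle network on `m` vertices from which the unit transaction from `0` to
`l` is feasible is `c^l (c+1)^(m−l) + c^(m−l) (c+1)^l − 2 c^m`; consequently, with
`r = c/(c+1)`, the fraction of the `(c+1)^m − c^m` classes allowing the transaction is
`(r^l + r^(m−l) − 2r^m)/(1 − r^m)`. -/
theorem stmt11 (m c l : ℕ) [NeZero m] (hm : 3 ≤ m) (hc : 1 ≤ c)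
    (hl : 1 ≤ l) (hlm : l ≤ m - 1) :
    {d : ZMod m → ℕ | ∃ σ : ZMod m → ZMod m → ℕ,
        IsState (fun i j => if j = i + 1 ∨ i = j + 1 then c else 0) σ ∧ score σ = d ∧
        Feasible σ (0 : ZMod m) (l : ZMod m)}.ncard =
      c ^ l * (c + 1) ^ (m - l) + c ^ (m - l) * (c + 1) ^ l - 2 * c ^ m ∧
    (({d : ZMod m → ℕ | ∃ σ : ZMod m → ZMod m → ℕ,
        IsState (fun i j => if j = i + 1 ∨ i = j + 1 then c else 0) σ ∧ score σ = d ∧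
        Feasible σ (0 : ZMod m) (l : ZMod m)}.ncard : ℝ) /
          (((c : ℝ) + 1) ^ m - (c : ℝ) ^ m) =
        (((c : ℝ) / ((c : ℝ) + 1)) ^ l + ((c : ℝ) / ((c : ℝ) + 1)) ^ (m - l) -
            2 * ((c : ℝ) / ((c : ℝ) + 1)) ^ m) /
          (1 - ((c : ℝ) / ((c : ℝ) + 1)) ^ m)) := by
  classical
  have hlm' : l < m := by omega
  set T : Finset (ZMod m → ℕ) :=
    (Fintype.piFinset fun _ : ZMod m => Finset.range (c+1)).filter
      (fun a => (S11.CWp c l a ∨ S11.CCWp l a) ∧ ∃ i, a i = 0) with hTdef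
  have hTmem : ∀ a : ZMod m → ℕ, a ∈ T ↔
      (∀ i, a i ≤ c) ∧ (S11.CWp c l a ∨ S11.CCWp l a) ∧ ∃ i, a i = 0 := by
    intro a
    rw [hTdef, Finset.mem_filter, Fintype.mem_piFinset]
    constructor
    · rintro ⟨h1, h2⟩
      exact ⟨fun i => by have := h1 i; rw [Finset.mem_range] at this; omega, h2⟩
    · rintro ⟨h1, h2⟩
      exact ⟨fun i => Finset.mem_range.2 (by have := h1 i; omega), h2⟩
  have hSeq : {d : ZMod m → ℕ | ∃ σ : ZMod m → ZMod m → ℕ,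
        IsState (fun i j => if j = i + 1 ∨ i = j + 1 then c else 0) σ ∧ score σ = d ∧
        Feasible σ (0 : ZMod m) (l : ZMod m)} = ↑(T.image (S11.Sc c)) := by
    ext d
    simp only [Set.mem_setOf_eq, Finset.coe_image, Set.mem_image, Finset.mem_coe]
    constructor
    · rintro ⟨σ, hst, hsc, hfe⟩
      obtain ⟨hσ, hbd⟩ := S11.state_eq_sig hm hst
      set a : ZMod m → ℕ := fun i => σ i (i+1) with hadef
      have hsc' : S11.Sc c a = d := by
        rw [← hsc, hσ, S11.score_sig hm]
      have hf : S11.CWp c l a ∨ S11.CCWp l a :=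
        (S11.feas_iff hm hc hl hlm a hbd).1 (by rwa [hσ] at hfe)
      obtain ⟨b, hb1, hb2, hb3, hb4⟩ := S11.normalize hc hbd hf
      exact ⟨b, (hTmem b).2 ⟨hb1, hb2, hb3⟩, by rw [hb4, hsc']⟩
    · rintro ⟨a, haT, rfl⟩
      obtain ⟨hbox, hf, -⟩ := (hTmem a).1 haT
      exact ⟨S11.sig c a, S11.isState_sig hm c a hbox, S11.score_sig hm a,
        (S11.feas_iff hm hc hl hlm a hbox).2 hf⟩
  have hcard : {d : ZMod m → ℕ | ∃ σ : ZMod m → ZMod m → ℕ,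
        IsState (fun i j => if j = i + 1 ∨ i = j + 1 then c else 0) σ ∧ score σ = d ∧
        Feasible σ (0 : ZMod m) (l : ZMod m)}.ncard = T.card := by
    rw [hSeq, Set.ncard_coe_finset]
    apply Finset.card_image_of_injOn
    intro x hx y hy hxy
    obtain ⟨hx1, -, hx3⟩ := (hTmem x).1 hx
    obtain ⟨hy1, -, hy3⟩ := (hTmem y).1 hy
    exact S11.Sc_inj hx1 hy1 hx3 hy3 hxy
  have hcount := S11.count hm hc hl hlm T hTmem
  have hmain := hcard.trans hcount
  refine ⟨hmain, ?_⟩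
  rw [hmain]
  have hle1 : c ^ m ≤ c ^ l * (c + 1) ^ (m - l) := by
    calc c ^ m = c ^ l * c ^ (m - l) := by rw [← pow_add]; congr 1; omega
    _ ≤ c ^ l * (c + 1) ^ (m - l) :=
      Nat.mul_le_mul_left _ (Nat.pow_le_pow_left (by omega) _)
  have hle2 : c ^ m ≤ c ^ (m - l) * (c + 1) ^ l := by
    calc c ^ m = c ^ (m - l) * c ^ l := by rw [← pow_add]; congr 1; omega
    _ ≤ c ^ (m - l) * (c + 1) ^ l :=
      Nat.mul_le_mul_left _ (Nat.pow_le_pow_left (by omega) _)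
  have hle : 2 * c ^ m ≤ c ^ l * (c + 1) ^ (m - l) + c ^ (m - l) * (c + 1) ^ l := by omega
  rw [Nat.cast_sub hle]
  obtain ⟨k, hk, hk1⟩ : ∃ k, m = l + k ∧ 1 ≤ k := ⟨m - l, by omega, by omega⟩
  rw [hk]
  simp only [Nat.add_sub_cancel_left]
  push_cast
  set x : ℝ := (c : ℝ) with hxdef
  have hx0 : (0:ℝ) ≤ x := Nat.cast_nonneg c
  have hx1 : (1:ℝ) ≤ x := by rw [hxdef]; exact_mod_cast hc
  have hxp : (0:ℝ) < x + 1 := by linarith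
  have hxne : x + 1 ≠ 0 := ne_of_gt hxp
  have hpowlt : x ^ (l + k) < (x + 1) ^ (l + k) :=
    pow_lt_pow_left₀ (by linarith) hx0 (by omega)
  have hDne : (x + 1) ^ (l + k) - x ^ (l + k) ≠ 0 := sub_ne_zero.2 (ne_of_gt hpowlt)
  have hr1 : x / (x + 1) < 1 := (div_lt_one hxp).2 (by linarith)
  have hr0 : (0:ℝ) ≤ x / (x + 1) := by positivity
  have hrm : (x / (x + 1)) ^ (l + k) < 1 := pow_lt_one₀ hr0 hr1 (by omega)
  have hrne : 1 - (x / (x + 1)) ^ (l + k) ≠ 0 := sub_ne_zero.2 (ne_of_gt hrm)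
  have hpne : ((x+1) : ℝ) ^ (l+k) ≠ 0 := pow_ne_zero _ hxne
  rw [div_eq_div_iff (by exact sub_ne_zero.2 (ne_of_gt hpowlt)) hrne]
  simp only [div_pow]
  field_simp
  ring
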